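/- In a two-zone building (n = 2) where only zone 1 is controlled (m = 1) and the thermal prices are spatially uniform (a_1(t) = a_2(t) = a(t) for all t), the savings overestimation error equals S_1 − S = α_{12} ∫_0^τ a(t) x_1(t) dt. -/
import Mathlib


/-- In a two-zone building where only zone 1 is controlled and the
thermal prices are spatially uniform, the savings overestimation error equals
`S_1 − S = α_{12} ∫_0^τ a(t) x_1(t) dt`. -/
theorem two_zone_overestimation_error
    (τ : ℝ) (hτ : 0 < τ)
    (T0 T1 T2 Tt1 Tt2 q1 q2 qt1 qt2 w1 w2 : ℝ → ℝ)
    (C1 C2 α10 α12 α20 : ℝ)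
    (hC1 : 0 < C1) (hC2 : 0 < C2)
    (h10 : 0 ≤ α10) (h12 : 0 ≤ α12) (h20 : 0 ≤ α20)
    (a : ℝ → ℝ) (ha : ContDiff ℝ 1 a)
    (hq1 : Continuous q1) (hq2 : Continuous q2)
    (hqt1 : Continuous qt1) (hqt2 : Continuous qt2)
    (hdyn1 : ∀ t ∈ Set.Icc (0 : ℝ) τ,
      HasDerivAt T1 ((α10 * (T0 t - T1 t) + α12 * (T2 t - T1 t) + q1 t + w1 t) / C1) t)
    (hdyn2 : ∀ t ∈ Set.Icc (0 : ℝ) τ,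
      HasDerivAt T2 ((α20 * (T0 t - T2 t) + α12 * (T1 t - T2 t) + q2 t + w2 t) / C2) t)
    (hdynt1 : ∀ t ∈ Set.Icc (0 : ℝ) τ,
      HasDerivAt Tt1 ((α10 * (T0 t - Tt1 t) + α12 * (Tt2 t - Tt1 t) + qt1 t + w1 t) / C1) t)
    (hdynt2 : ∀ t ∈ Set.Icc (0 : ℝ) τ,
      HasDerivAt Tt2 ((α20 * (T0 t - Tt2 t) + α12 * (Tt1 t - Tt2 t) + qt2 t + w2 t) / C2) t)
    (hunc : ∀ t ∈ Set.Icc (0 : ℝ) τ, Tt2 t = T2 t)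
    (hinit1 : Tt1 0 = T1 0) (hfin1 : Tt1 τ = T1 τ)
    (hinit2 : Tt2 0 = T2 0) (hfin2 : Tt2 τ = T2 τ)
    (S1 S2 : ℝ)
    (hS1 : S1 = ∫ t in (0 : ℝ)..τ, a t * (q1 t - qt1 t))
    (hS2 : S2 = ∫ t in (0 : ℝ)..τ, a t * (q2 t - qt2 t)) :
    S1 - (S1 + S2) = α12 * ∫ t in (0 : ℝ)..τ, a t * (T1 t - Tt1 t) := by
  -- Key pointwise identity on the open interval:
  have key : ∀ t ∈ Set.Ioo (0 : ℝ) τ,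
      a t * (q2 t - qt2 t) = -(α12 * (a t * (T1 t - Tt1 t))) := by
    intro t ht
    have htIcc : t ∈ Set.Icc (0 : ℝ) τ := Set.mem_Icc_of_Ioo ht
    -- Tt2 = T2 near t
    have hnhds : Set.Icc (0 : ℝ) τ ∈ nhds t :=
      mem_nhds_iff.mpr ⟨Set.Ioo 0 τ, Set.Ioo_subset_Icc_self, isOpen_Ioo, ht⟩
    have hev : Tt2 =ᶠ[nhds t] T2 :=
      Filter.eventuallyEq_of_mem hnhds (fun s hs => hunc s hs)
    have h1 : HasDerivAt T2
        ((α20 * (T0 t - Tt2 t) + α12 * (Tt1 t - Tt2 t) + qt2 t + w2 t) / C2) t :=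
      (hdynt2 t htIcc).congr_of_eventuallyEq hev.symm
    have h2 := hdyn2 t htIcc
    have heq := h1.unique h2
    have hT2 : Tt2 t = T2 t := hunc t htIcc
    rw [hT2] at heq
    have hC2ne : C2 ≠ 0 := ne_of_gt hC2
    field_simp at heq
    have hq : q2 t - qt2 t = -(α12 * (T1 t - Tt1 t)) := by nlinarith [heq]
    rw [hq]; ring
  have hcong : (∫ t in (0 : ℝ)..τ, a t * (q2 t - qt2 t))
      = ∫ t in (0 : ℝ)..τ, -(α12 * (a t * (T1 t - Tt1 t))) := by
    apply intervalIntegral.integral_congr_ae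
    rw [MeasureTheory.ae_iff]
    refine MeasureTheory.measure_mono_null (fun x hx => ?_)
      (MeasureTheory.measure_singleton τ)
    simp only [Set.mem_setOf_eq, Classical.not_imp] at hx
    obtain ⟨hx1, hx2⟩ := hx
    rw [Set.uIoc_of_le hτ.le] at hx1
    by_contra hne
    exact hx2 (key x ⟨hx1.1, lt_of_le_of_ne hx1.2 (by simpa using hne)⟩)
  have hS2' : S2 = -(α12 * ∫ t in (0 : ℝ)..τ, a t * (T1 t - Tt1 t)) := by
    rw [hS2, hcong, intervalIntegral.integral_neg, intervalIntegral.integral_const_mul]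
  linarith [hS2']
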